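/- For |q|<1 and |z|<1: ∑_{n=0}^∞ z^n q^{2n²+2n+1} / ((q;q²)_{n+1} (zq;q²)_{n+1}) = ∑_{n=1}^∞ z^{n-1} q^n / (q;q²)_n. -/

import Mathlib

noncomputable def qPoch (a q : ℂ) (n : ℕ) : ℂ := ∏ i ∈ Finset.range n, (1 - a * q ^ i)

noncomputable def qPochInf (a q : ℂ) : ℂ := ∏' i : ℕ, (1 - a * q ^ i)

noncomputable def qBinom (q : ℂ) (m k : ℕ) : ℂ :=
  if k ≤ m then qPoch q q m / (qPoch q q k * qPoch q q (m - k)) else 0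

open Finset

/-- Gaussian binomial coefficient as a complex number, defined by q-Pascal recursion. -/
noncomputable def qb (Q : ℂ) : ℕ → ℕ → ℂ
  | 0, 0 => 1
  | 0, _+1 => 0
  | _+1, 0 => 1
  | m+1, k+1 => qb Q m k + Q^(k+1) * qb Q m (k+1)

@[simp] lemma qb_zero_right (Q : ℂ) (m : ℕ) : qb Q m 0 = 1 := by
  cases m <;> rfl

lemma qb_succ_succ (Q : ℂ) (m k : ℕ) :
    qb Q (m+1) (k+1) = qb Q m k + Q^(k+1) * qb Q m (k+1) := rfl

lemma qb_eq_zero (Q : ℂ) {m k : ℕ} (h : m < k) : qb Q m k = 0 := by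
  induction m generalizing k with
  | zero => obtain ⟨k, rfl⟩ := Nat.exists_eq_add_of_lt h; rfl
  | succ m ih =>
    match k, h with
    | k+1, h =>
      rw [qb_succ_succ, ih (by omega), ih (by omega)]
      ring

@[simp] lemma qb_self (Q : ℂ) (m : ℕ) : qb Q m m = 1 := by
  induction m with
  | zero => rfl
  | succ m ih => rw [qb_succ_succ, ih, qb_eq_zero Q (Nat.lt_succ_self m)]; ring

lemma qb_pascal2 (Q : ℂ) : ∀ {m k : ℕ}, k ≤ m →
    qb Q (m+1) (k+1) = Q^(m-k) * qb Q m k + qb Q m (k+1) := by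
  intro m
  induction m with
  | zero =>
    intro k hk; interval_cases k
    simp [qb_succ_succ, qb_eq_zero Q (by omega : (0:ℕ) < 1)]
  | succ m ih =>
    intro k hk
    match k, hk with
    | 0, _ =>
      have d1 : qb Q (m+2) 1 = qb Q (m+1) 0 + Q^1 * qb Q (m+1) 1 := qb_succ_succ Q (m+1) 0
      have d2 : qb Q (m+1) 1 = qb Q m 0 + Q^1 * qb Q m 1 := qb_succ_succ Q m 0
      have i1 : qb Q (m+1) 1 = Q^(m-0) * qb Q m 0 + qb Q m 1 := ih (Nat.zero_le m)
      simp only [qb_zero_right, Nat.sub_zero] at d1 d2 i1 ⊢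
      linear_combination d1 + Q * i1 - d2
    | k+1, hk =>
      rcases Nat.lt_or_ge k m with hkm | hkm
      · have d1 : qb Q (m+2) (k+2) = qb Q (m+1) (k+1) + Q^(k+2) * qb Q (m+1) (k+2) :=
          qb_succ_succ Q (m+1) (k+1)
        have d2 : qb Q (m+1) (k+1) = qb Q m k + Q^(k+1) * qb Q m (k+1) := qb_succ_succ Q m k
        have d3 : qb Q (m+1) (k+2) = qb Q m (k+1) + Q^(k+2) * qb Q m (k+2) :=
          qb_succ_succ Q m (k+1)
        have i1 : qb Q (m+1) (k+1) = Q^(m-k) * qb Q m k + qb Q m (k+1) := ih (by omega)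
        have i2 : qb Q (m+1) (k+2) = Q^(m-(k+1)) * qb Q m (k+1) + qb Q m (k+2) := ih (by omega)
        have h1 : m - k = (m - (k+1)) + 1 := by omega
        have h2 : m + 1 - (k+1) = (m - (k+1)) + 1 := by omega
        rw [h2]
        rw [h1] at i1
        linear_combination d1 + i1 + Q^(k+2) * i2 - Q^((m-(k+1))+1) * d2 - d3
      · have hk2 : k = m := by omega
        rw [hk2, Nat.sub_self, qb_eq_zero Q (by omega : m+1 < m+2), qb_self, qb_self]
        ring

lemma qPoch_succ (a Q : ℂ) (n : ℕ) :
    qPoch a Q (n+1) = qPoch a Q n * (1 - a * Q^n) := by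
  simp [qPoch, Finset.prod_range_succ]

lemma qPoch_add (a Q : ℂ) (A B : ℕ) :
    qPoch a Q (A+B) = qPoch a Q A * ∏ i ∈ range B, (1 - a * Q^(A+i)) := by
  simp [qPoch, Finset.prod_range_add, pow_add, mul_assoc]

/-- Key product formula: `qb (n+m) n * (Q;Q)_n = ∏_{i<n} (1 - Q^(m+1+i))`. -/
lemma qb_mul_pochQ (Q : ℂ) : ∀ n m : ℕ,
    qb Q (n+m) n * qPoch Q Q n = ∏ i ∈ range n, (1 - Q^(m+1+i)) := by
  intro n
  induction n with
  | zero => intro m; simp [qPoch]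
  | succ n ihn =>
    intro m
    induction m with
    | zero =>
      simp only [Nat.add_zero, qb_self, one_mul, qPoch]
      exact Finset.prod_congr rfl fun i _ => by rw [show 0+1+i = i+1 from by omega, ← pow_succ']
    | succ m ihm =>
      have d1 : qb Q (n+1+(m+1)) (n+1) = qb Q (n+m+1) n + Q^(n+1) * qb Q (n+m+1) (n+1) := by
        rw [show n+1+(m+1) = (n+m+1)+1 by omega]; exact qb_succ_succ Q (n+m+1) n
      have i1 : qb Q (n+(m+1)) n * qPoch Q Q n = ∏ i ∈ range n, (1 - Q^(m+2+i)) := by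
        rw [ihn (m+1)]
      have i2 : qb Q ((n+1)+m) (n+1) * qPoch Q Q (n+1) =
          (1 - Q^(m+1)) * ∏ i ∈ range n, (1 - Q^(m+2+i)) := by
        rw [ihm, Finset.prod_range_succ', mul_comm]
        congr 1
        exact Finset.prod_congr rfl fun i _ => by rw [show m+1+(i+1) = m+2+i by omega]
      have hpoch : qPoch Q Q (n+1) = qPoch Q Q n * (1 - Q^(n+1)) := by
        rw [qPoch_succ, ← pow_succ']
      have hgoal : (∏ i ∈ range (n+1), (1 - Q^(m+1+1+i))) =
          (∏ i ∈ range n, (1 - Q^(m+2+i))) * (1 - Q^(n+m+2)) := by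
        rw [Finset.prod_range_succ, show m+1+1+n = n+m+2 from by omega]
      have e3 : qb Q (n+m+1) (n+1) = qb Q ((n+1)+m) (n+1) := by
        rw [show n+m+1 = (n+1)+m by omega]
      have e4 : qb Q (n+m+1) n = qb Q (n+(m+1)) n := by
        rw [show n+m+1 = n+(m+1) by omega]
      rw [d1, hgoal, e3, e4, hpoch]
      set A := ∏ i ∈ range n, (1 - Q^(m+2+i)) with hA
      have hq1 : Q^(n+1) * Q^(m+1) = Q^(n+m+2) := by rw [← pow_add]; congr 1; omega
      calc (qb Q (n+(m+1)) n + Q^(n+1) * qb Q ((n+1)+m) (n+1)) * (qPoch Q Q n * (1 - Q^(n+1)))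
          = (1 - Q^(n+1)) * (qb Q (n+(m+1)) n * qPoch Q Q n)
            + Q^(n+1) * (qb Q ((n+1)+m) (n+1) * (qPoch Q Q n * (1 - Q^(n+1)))) := by ring
        _ = (1 - Q^(n+1)) * A + Q^(n+1) * ((1 - Q^(m+1)) * A) := by
            rw [i1, ← hpoch, i2]
        _ = A * (1 - Q^(n+m+2)) := by linear_combination A * hq1

lemma qPoch_ne_zero {a Q : ℂ} (ha : ‖a‖ < 1) (hQ : ‖Q‖ ≤ 1) (n : ℕ) : qPoch a Q n ≠ 0 := by
  rw [qPoch, Finset.prod_ne_zero_iff]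
  intro i _
  have h1 : ‖a * Q ^ i‖ < 1 := by
    rw [norm_mul, norm_pow]
    calc ‖a‖ * ‖Q‖ ^ i ≤ ‖a‖ * 1 := by
          apply mul_le_mul_of_nonneg_left _ (norm_nonneg a)
          exact pow_le_one₀ (norm_nonneg Q) hQ
      _ < 1 := by simpa using ha
  intro h
  rw [sub_eq_zero] at h
  rw [← h] at h1
  simp at h1

lemma norm_qPoch_ge {a Q : ℂ} (ha : ‖a‖ < 1) (hQ : ‖Q‖ ≤ 1) (n : ℕ) :
    (1 - ‖a‖)^n ≤ ‖qPoch a Q n‖ := by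
  rw [qPoch]
  rw [norm_prod]
  rw [show (1-‖a‖)^n = ∏ _i ∈ range n, (1-‖a‖) by rw [Finset.prod_const, Finset.card_range]]
  apply Finset.prod_le_prod
  · intro i _; linarith
  · intro i _
    calc 1 - ‖a‖ ≤ 1 - ‖a * Q^i‖ := by
          have : ‖a * Q^i‖ ≤ ‖a‖ := by
            rw [norm_mul, norm_pow]
            calc ‖a‖ * ‖Q‖^i ≤ ‖a‖ * 1 := by
                  apply mul_le_mul_of_nonneg_left _ (norm_nonneg a)
                  exact pow_le_one₀ (norm_nonneg Q) hQ
              _ = ‖a‖ := by ring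
          linarith
      _ ≤ ‖1 - a * Q^i‖ := by
          calc 1 - ‖a * Q^i‖ = ‖(1:ℂ)‖ - ‖a * Q^i‖ := by simp
            _ ≤ ‖1 - a * Q^i‖ := norm_sub_norm_le _ _

lemma qb_norm_le {Q : ℂ} (hQ : ‖Q‖ < 1) (n m : ℕ) :
    ‖qb Q (n+m) n‖ ≤ (2 / (1-‖Q‖))^n := by
  have h1 : (0:ℝ) < 1 - ‖Q‖ := by linarith
  have hposi : (0:ℝ) < (1 - ‖Q‖)^n := pow_pos h1 n
  have hp : (1 - ‖Q‖)^n ≤ ‖qPoch Q Q n‖ := norm_qPoch_ge hQ hQ.le n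
  have hprod : ‖∏ i ∈ range n, (1 - Q^(m+1+i))‖ ≤ 2^n := by
    rw [norm_prod, show (2:ℝ)^n = ∏ _i ∈ range n, 2 by rw [Finset.prod_const, Finset.card_range]]
    apply Finset.prod_le_prod (fun i _ => norm_nonneg _)
    intro i _
    calc ‖1 - Q^(m+1+i)‖ ≤ ‖(1:ℂ)‖ + ‖Q^(m+1+i)‖ := norm_sub_le _ _
      _ ≤ 1 + 1 := by
          rw [norm_one, norm_pow]
          have := pow_le_one₀ (norm_nonneg Q) hQ.le (n := m+1+i)
          linarith
      _ = 2 := by norm_num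
  have key := qb_mul_pochQ Q n m
  have h2 : ‖qb Q (n+m) n‖ * ‖qPoch Q Q n‖ ≤ 2^n := by
    rw [← norm_mul, key]; exact hprod
  have h3 : ‖qb Q (n+m) n‖ * (1 - ‖Q‖)^n ≤ 2^n :=
    le_trans (mul_le_mul_of_nonneg_left hp (norm_nonneg _)) h2
  rw [div_pow, le_div_iff₀ hposi]
  exact h3

lemma summable_qb {Q a : ℂ} (hQ : ‖Q‖ < 1) (ha : ‖a‖ < 1) (n : ℕ) :
    Summable (fun m : ℕ => qb Q (n+m) n * a^m) := by
  apply Summable.of_norm_bounded (g := fun m => (2/(1-‖Q‖))^n * ‖a‖^m)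
  · exact (summable_geometric_of_lt_one (norm_nonneg a) ha).mul_left _
  · intro m
    rw [norm_mul, norm_pow]
    exact mul_le_mul_of_nonneg_right (qb_norm_le hQ n m) (pow_nonneg (norm_nonneg a) m)

lemma tsum_qb_mul {Q a : ℂ} (hQ : ‖Q‖ < 1) (ha : ‖a‖ < 1) :
    ∀ n : ℕ, (∑' m, qb Q (n+m) n * a^m) * qPoch a Q (n+1) = 1 := by
  intro n
  induction n with
  | zero =>
    have h1 : qPoch a Q 1 = 1 - a := by simp [qPoch]
    simp only [Nat.zero_add, qb_zero_right, one_mul, h1]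
    rw [tsum_geometric_of_norm_lt_one ha]
    have : (1:ℂ) - a ≠ 0 := by
      intro h; rw [sub_eq_zero] at h
      rw [← h] at ha; simp at ha
    field_simp
  | succ n ih =>
    set g : ℕ → ℂ := fun m => qb Q (n+m) n * a^m with hg
    set h : ℕ → ℂ := fun m => qb Q (n+1+m) (n+1) * a^m with hh
    have hgs : Summable g := summable_qb hQ ha n
    have hhs : Summable h := summable_qb hQ ha (n+1)
    have hpt : ∀ m, h (m+1) = g (m+1) + (Q^(n+1) * a) * h m := by
      intro m
      have e1 : n+1+(m+1) = (n+1+m)+1 := by omega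
      have e2 : n+1+m = n+(m+1) := by omega
      simp only [hh, hg]
      rw [e1, qb_succ_succ, e2]
      ring
    have hsum1 : ∑' m, h m = h 0 + ∑' m, h (m+1) := Summable.tsum_eq_zero_add hhs
    have hsum2 : ∑' m, g m = g 0 + ∑' m, g (m+1) := Summable.tsum_eq_zero_add hgs
    have hgs' : Summable (fun m => g (m+1)) := (summable_nat_add_iff 1).2 hgs
    have hhs' : Summable (fun m => (Q^(n+1) * a) * h m) := hhs.mul_left _
    have hsum3 : ∑' m, h (m+1) = (∑' m, g (m+1)) + (Q^(n+1)*a) * ∑' m, h m := by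
      calc ∑' m, h (m+1) = ∑' m, (g (m+1) + (Q^(n+1) * a) * h m) := by
            exact tsum_congr hpt
        _ = (∑' m, g (m+1)) + ∑' m, (Q^(n+1)*a) * h m := Summable.tsum_add hgs' hhs'
        _ = (∑' m, g (m+1)) + (Q^(n+1)*a) * ∑' m, h m := by rw [tsum_mul_left]
    have hg0 : g 0 = 1 := by simp [hg]
    have hh0 : h 0 = 1 := by simp [hh]
    -- F_{n+1} (1 - a Q^{n+1}) = F_n
    have hrec : (∑' m, h m) * (1 - a * Q^(n+1)) = ∑' m, g m := by
      have := hsum1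
      rw [hsum3, hh0] at this
      rw [hsum2, hg0]
      linear_combination this
    have hpoch : qPoch a Q (n+2) = qPoch a Q (n+1) * (1 - a * Q^(n+1)) := qPoch_succ a Q (n+1)
    calc (∑' m, h m) * qPoch a Q (n+2)
        = ((∑' m, h m) * (1 - a * Q^(n+1))) * qPoch a Q (n+1) := by rw [hpoch]; ring
      _ = (∑' m, g m) * qPoch a Q (n+1) := by rw [hrec]
      _ = 1 := ih

noncomputable def gsum (Q x : ℂ) (N : ℕ) : ℂ :=
  ∑ n ∈ range (N+1), qb Q N n * Q^(n^2) * x^n * ∏ i ∈ range (N-n), (1 - x*Q^(n+1+i))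

noncomputable def hsum (Q x : ℂ) (N : ℕ) : ℂ :=
  ∑ n ∈ range N, qb Q N n * Q^(n^2) * x^n * ∏ i ∈ range (N-1-n), (1 - x*Q^(n+1+i))

lemma split_id (Q x : ℂ) (N : ℕ) :
    gsum Q x N = (1 - x*Q^N) * hsum Q x N + Q^(N^2) * x^N := by
  unfold gsum hsum
  rw [Finset.sum_range_succ, Finset.mul_sum]
  congr 1
  · apply Finset.sum_congr rfl
    intro n hn
    have hn' : n < N := mem_range.mp hn
    rw [show N - n = (N-1-n) + 1 from by omega, Finset.prod_range_succ,
      show n+1+(N-1-n) = N from by omega]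
    ring
  · simp [Nat.sub_self]

lemma fin_id (Q : ℂ) (N : ℕ) : ∀ x : ℂ, gsum Q x N = 1 := by
  induction N with
  | zero => intro x; simp [gsum]
  | succ N ih =>
    intro x
    set e : ℕ → ℂ := fun n => match n with
      | 0 => 0
      | m+1 => Q^(N-m) * qb Q N m * Q^((m+1)^2) * x^(m+1) *
          ∏ i ∈ range (N-1-m), (1 - x*Q^(m+2+i)) with he
    have hH : hsum Q x (N+1) = gsum Q x N + x*Q^(N+1) * hsum Q (x*Q) N := by
      unfold hsum gsum
      have key : ∀ n ∈ range (N+1),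
          qb Q (N+1) n * Q^(n^2) * x^n * ∏ i ∈ range (N+1-1-n), (1 - x*Q^(n+1+i))
          = qb Q N n * Q^(n^2) * x^n * ∏ i ∈ range (N-n), (1 - x*Q^(n+1+i)) + e n := by
        intro n hn
        have hn' : n < N+1 := mem_range.mp hn
        match n with
        | 0 =>
          simp only [he]
          rw [show N+1-1-0 = N-0 from by omega]
          simp [qb_zero_right]
        | m+1 =>
          have hm : m ≤ N := by omega
          have hp := qb_pascal2 Q hm
          simp only [he]
          rw [show N+1-1-(m+1) = N-(m+1) from by omega, hp]
          have hprodeq : (∏ i ∈ range (N-1-m), (1 - x*Q^(m+2+i)))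
              = ∏ i ∈ range (N-(m+1)), (1 - x*Q^(m+1+1+i)) := by
            apply Finset.prod_congr (by rw [show N-1-m = N-(m+1) from by omega])
            intro i _
            rw [show m+2+i = m+1+1+i from by omega]
          rw [hprodeq]
          ring
      rw [Finset.sum_congr rfl key, Finset.sum_add_distrib]
      congr 1
      rw [Finset.sum_range_succ']
      have he0 : e 0 = 0 := rfl
      rw [he0, add_zero, Finset.mul_sum]
      apply Finset.sum_congr rfl
      intro m hm
      have hm' : m < N := mem_range.mp hm
      simp only [he]
      have hprodeq : (∏ i ∈ range (N-1-m), (1 - x*Q^(m+2+i)))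
          = ∏ i ∈ range (N-1-m), (1 - (x*Q)*Q^(m+1+i)) := by
        apply Finset.prod_congr rfl
        intro i _
        rw [show m+2+i = (m+1+i)+1 from by omega, pow_succ]
        ring
      rw [hprodeq]
      have hpow : Q^(N-m) * Q^((m+1)^2) = Q^(N+1) * Q^(m^2) * Q^m := by
        rw [← pow_add, ← pow_add, ← pow_add]
        congr 1
        have h2 : (m+1)^2 = m^2 + (2*m+1) := by ring
        rw [h2]
        have h3 : m^2 ≤ m^2 := le_refl _
        omega
      calc Q^(N-m) * qb Q N m * Q^((m+1)^2) * x^(m+1) * ∏ i ∈ range (N-1-m), (1 - (x*Q)*Q^(m+1+i))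
          = (Q^(N-m) * Q^((m+1)^2)) * qb Q N m * x^(m+1) *
              ∏ i ∈ range (N-1-m), (1 - (x*Q)*Q^(m+1+i)) := by ring
        _ = (Q^(N+1) * Q^(m^2) * Q^m) * qb Q N m * x^(m+1) *
              ∏ i ∈ range (N-1-m), (1 - (x*Q)*Q^(m+1+i)) := by rw [hpow]
        _ = x*Q^(N+1) * (qb Q N m * Q^(m^2) * (x*Q)^m *
              ∏ i ∈ range (N-1-m), (1 - (x*Q)*Q^(m+1+i))) := by
            rw [mul_pow]
            ring
    have hB : (1 - x*Q^(N+1)) * hsum Q (x*Q) N = 1 - Q^(N^2) * (x*Q)^N := by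
      have h1 := split_id Q (x*Q) N
      rw [ih (x*Q)] at h1
      have e2 : x*Q*Q^N = x*Q^(N+1) := by rw [pow_succ]; ring
      linear_combination -h1 - hsum Q (x*Q) N * e2
    have hpow2 : Q^(N+1) * (Q^(N^2) * Q^N) = Q^((N+1)^2) := by
      rw [← pow_add, ← pow_add]
      congr 1
      ring
    rw [split_id Q x (N+1), hH, ih x]
    linear_combination (x*Q^(N+1)) * hB - x^(N+1) * hpow2

lemma summable_sq {b c : ℝ} (hb : 0 ≤ b) (hc0 : 0 ≤ c) (hc : c < 1) :
    Summable (fun n : ℕ => b^n * c^(n^2)) := by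
  apply summable_of_ratio_norm_eventually_le (show (1:ℝ)/2 < 1 by norm_num)
  have ht : Filter.Tendsto (fun n : ℕ => b * (c * (c^2)^n)) Filter.atTop (nhds 0) := by
    have h1 : Filter.Tendsto (fun n : ℕ => (c^2)^n) Filter.atTop (nhds 0) := by
      apply tendsto_pow_atTop_nhds_zero_of_lt_one (by positivity)
      nlinarith
    have := (h1.const_mul c).const_mul b
    simpa using this
  have hev : ∀ᶠ n : ℕ in Filter.atTop, b * (c * (c^2)^n) < 1/2 :=
    ht.eventually (gt_mem_nhds (show (0:ℝ) < 1/2 by norm_num))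
  filter_upwards [hev] with n hn
  have hfn : (0:ℝ) ≤ b^n * c^(n^2) := by positivity
  have hstep : b^(n+1) * c^((n+1)^2) = (b * (c * (c^2)^n)) * (b^n * c^(n^2)) := by
    rw [pow_succ, show (n+1)^2 = n^2 + (2*n+1) from by ring, pow_add,
      show 2*n+1 = (2*n)+1 from rfl, pow_succ, ← pow_mul]
    ring
  rw [Real.norm_of_nonneg (by positivity), Real.norm_of_nonneg hfn, hstep]
  apply mul_le_mul_of_nonneg_right _ hfn
  linarith [hn, mul_nonneg hb (mul_nonneg hc0 (pow_nonneg (sq_nonneg c) n))]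

set_option maxHeartbeats 1000000 in
theorem stmt_0 (q z : ℂ) (hq : ‖q‖ < 1) (hz : ‖z‖ < 1) :
    ∑' n : ℕ, z ^ n * q ^ (2 * n ^ 2 + 2 * n + 1) /
      (qPoch q (q ^ 2) (n + 1) * qPoch (z * q) (q ^ 2) (n + 1)) =
    ∑' n : ℕ, z ^ n * q ^ (n + 1) / qPoch q (q ^ 2) (n + 1) := by
  have hq0 : (0:ℝ) ≤ ‖q‖ := norm_nonneg q
  have hQ : ‖q^2‖ < 1 := by
    rw [norm_pow]
    exact pow_lt_one₀ hq0 hq (by norm_num)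
  have hzq : ‖z*q‖ < 1 := by
    rw [norm_mul]
    calc ‖z‖ * ‖q‖ < 1 * 1 := by
          apply mul_lt_mul'' hz hq (norm_nonneg z) (norm_nonneg q)
      _ = 1 := by norm_num
  have h1q : (0:ℝ) < 1 - ‖q‖ := by linarith
  have h1Q : (0:ℝ) < 1 - ‖q^2‖ := by linarith
  set c : ℕ × ℕ → ℂ := fun p =>
    (z ^ p.1 * q ^ (2 * p.1 ^ 2 + 2 * p.1 + 1) / qPoch q (q ^ 2) (p.1 + 1)) *
      (qb (q^2) (p.1 + p.2) p.1 * (z*q)^p.2) with hc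
  -- Summability of c
  set K : ℝ := ‖z‖ * ‖q‖^2 * (2 / (1 - ‖q^2‖)) * (1/(1-‖q‖)) with hK
  set D : ℝ := ‖q‖ / (1-‖q‖) with hD
  have hKnn : 0 ≤ K := by positivity
  have hA : Summable (fun n : ℕ => K^n * (‖q‖^2)^(n^2) * D) := by
    apply Summable.mul_right
    exact summable_sq hKnn (by positivity) (by rw [← norm_pow]; exact hQ)
  have hB : Summable (fun m : ℕ => ‖z*q‖^m) :=
    summable_geometric_of_lt_one (norm_nonneg _) hzq
  have hbound : ∀ p : ℕ × ℕ, ‖c p‖ ≤ (K^p.1 * (‖q‖^2)^(p.1^2) * D) * ‖z*q‖^p.2 := by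
    rintro ⟨n, m⟩
    have hP1 : (1-‖q‖)^(n+1) ≤ ‖qPoch q (q^2) (n+1)‖ := norm_qPoch_ge hq hQ.le (n+1)
    have hP1pos : (0:ℝ) < (1-‖q‖)^(n+1) := by positivity
    have hqb : ‖qb (q^2) (n+m) n‖ ≤ (2/(1-‖q^2‖))^n := qb_norm_le hQ n m
    simp only [hc, norm_mul, norm_div, norm_pow]
    have step1 : ‖z‖^n * ‖q‖^(2*n^2+2*n+1) / ‖qPoch q (q^2) (n+1)‖ ≤
        ‖z‖^n * ‖q‖^(2*n^2+2*n+1) / (1-‖q‖)^(n+1) := by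
      apply div_le_div_of_nonneg_left (by positivity) hP1pos hP1
    have step2 : ‖qb (q^2) (n+m) n‖ * (‖z‖*‖q‖)^m ≤ (2/(1-‖q^2‖))^n * (‖z‖*‖q‖)^m :=
      mul_le_mul_of_nonneg_right hqb (by positivity)
    calc ‖z‖^n * ‖q‖^(2*n^2+2*n+1) / ‖qPoch q (q^2) (n+1)‖ *
          (‖qb (q^2) (n+m) n‖ * (‖z‖*‖q‖)^m)
        ≤ (‖z‖^n * ‖q‖^(2*n^2+2*n+1) / (1-‖q‖)^(n+1)) * ((2/(1-‖q^2‖))^n * (‖z‖*‖q‖)^m) := by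
          apply mul_le_mul step1 step2 (by positivity) (by positivity)
      _ = (K^n * (‖q‖^2)^(n^2) * D) * (‖z‖*‖q‖)^m := by
          have hKn : K^n = ‖z‖^n * ((‖q‖^2)^n * ((2/(1-‖q^2‖))^n * (1/(1-‖q‖))^n)) := by
            rw [hK, mul_pow, mul_pow, mul_pow]
            ring
          rw [hKn, hD]
          rw [show ‖q‖^(2*n^2+2*n+1) = (‖q‖^2)^(n^2) * (‖q‖^2)^n * ‖q‖ by
            rw [← pow_mul, ← pow_mul, ← pow_add, ← pow_succ]]
          rw [pow_succ]
          have h1 : ((1:ℝ)-‖q‖)^n ≠ 0 := by positivity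
          have h2 : ((1:ℝ)-‖q‖) ≠ 0 := by positivity
          have h3 : ((1:ℝ)-‖q^2‖)^n ≠ 0 := by positivity
          rw [div_pow, div_pow]
          field_simp
          ring
  have hc_sum : Summable c :=
    Summable.of_norm_bounded (hA.mul_of_nonneg hB (fun n => by positivity)
      (fun m => by positivity)) hbound
  -- Rewrite LHS as iterated sum of c
  have hLHS : ∀ n : ℕ, z ^ n * q ^ (2 * n ^ 2 + 2 * n + 1) /
      (qPoch q (q ^ 2) (n + 1) * qPoch (z * q) (q ^ 2) (n + 1)) = ∑' m, c (n, m) := by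
    intro n
    have hF := tsum_qb_mul hQ hzq n
    have hP2 : qPoch (z*q) (q^2) (n+1) ≠ 0 := qPoch_ne_zero hzq hQ.le (n+1)
    have hFinv : (∑' m, qb (q^2) (n+m) n * (z*q)^m) = (qPoch (z*q) (q^2) (n+1))⁻¹ := by
      have h2 : (∑' m, qb (q^2) (n+m) n * (z*q)^m) * qPoch (z*q) (q^2) (n+1) *
          (qPoch (z*q) (q^2) (n+1))⁻¹ = 1 * (qPoch (z*q) (q^2) (n+1))⁻¹ := by rw [hF]
      rwa [mul_assoc, mul_inv_cancel₀ hP2, mul_one, one_mul] at h2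
    calc z ^ n * q ^ (2 * n ^ 2 + 2 * n + 1) /
          (qPoch q (q ^ 2) (n + 1) * qPoch (z * q) (q ^ 2) (n + 1))
        = (z ^ n * q ^ (2 * n ^ 2 + 2 * n + 1) / qPoch q (q ^ 2) (n + 1)) *
            (qPoch (z * q) (q ^ 2) (n + 1))⁻¹ := by
          rw [div_eq_mul_inv, div_eq_mul_inv, mul_inv]
          ring
      _ = (z ^ n * q ^ (2 * n ^ 2 + 2 * n + 1) / qPoch q (q ^ 2) (n + 1)) *
            ∑' m, qb (q^2) (n+m) n * (z*q)^m := by rw [hFinv]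
      _ = ∑' m, c (n, m) := by
          rw [← tsum_mul_left]
  -- antidiagonal resummation
  have hsig : Summable (fun x : (Σ N : ℕ, {p // p ∈ Finset.HasAntidiagonal.antidiagonal N}) =>
      c (Finset.HasAntidiagonal.sigmaAntidiagonalEquivProd x)) :=
    Finset.HasAntidiagonal.sigmaAntidiagonalEquivProd.summable_iff.mpr hc_sum
  have hanti : ∑' p : ℕ × ℕ, c p = ∑' N : ℕ, ∑ kl ∈ Finset.HasAntidiagonal.antidiagonal N, c kl := by
    calc ∑' p : ℕ × ℕ, c p
        = ∑' x : (Σ N : ℕ, {p // p ∈ Finset.HasAntidiagonal.antidiagonal N}),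
            c (Finset.HasAntidiagonal.sigmaAntidiagonalEquivProd x) :=
          (Finset.HasAntidiagonal.sigmaAntidiagonalEquivProd.tsum_eq c).symm
      _ = ∑' N : ℕ, ∑' kl : {p // p ∈ Finset.HasAntidiagonal.antidiagonal N},
            c (Finset.HasAntidiagonal.sigmaAntidiagonalEquivProd ⟨N, kl⟩) := Summable.tsum_sigma hsig
      _ = ∑' N : ℕ, ∑ kl ∈ Finset.HasAntidiagonal.antidiagonal N, c kl := by
          apply tsum_congr
          intro N
          rw [← Finset.tsum_subtype]
          rfl
  -- per-antidiagonal evaluation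
  have hper : ∀ N : ℕ, ∑ kl ∈ Finset.HasAntidiagonal.antidiagonal N, c kl =
      z ^ N * q ^ (N + 1) / qPoch q (q ^ 2) (N + 1) := by
    intro N
    rw [Finset.Nat.sum_antidiagonal_eq_sum_range_succ_mk]
    have hPN : qPoch q (q^2) (N+1) ≠ 0 := qPoch_ne_zero hq hQ.le (N+1)
    rw [eq_div_iff hPN, Finset.sum_mul]
    have hfin := fin_id (q^2) N q
    unfold gsum at hfin
    calc ∑ n ∈ range (N+1), c (n, N-n) * qPoch q (q^2) (N+1)
        = ∑ n ∈ range (N+1), (z^N * q^(N+1)) *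
            (qb (q^2) N n * (q^2)^(n^2) * q^n * ∏ i ∈ range (N-n), (1 - q*(q^2)^(n+1+i))) := by
          apply Finset.sum_congr rfl
          intro n hn
          have hn' : n < N + 1 := mem_range.mp hn
          have hPsplit : qPoch q (q^2) (N+1) =
              qPoch q (q^2) (n+1) * ∏ i ∈ range (N-n), (1 - q*(q^2)^(n+1+i)) := by
            rw [← qPoch_add q (q^2) (n+1) (N-n), show (n+1)+(N-n) = N+1 from by omega]
          have hPn : qPoch q (q^2) (n+1) ≠ 0 := qPoch_ne_zero hq hQ.le (n+1)
          have hzpow : z^n * z^(N-n) = z^N := by rw [← pow_add]; congr 1; omega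
          have hqpow : q^(2*n^2+2*n+1) * q^(N-n) = q^(N+1) * (q^2)^(n^2) * q^n := by
            rw [← pow_mul, ← pow_add, ← pow_add, ← pow_add]
            congr 1
            have hnN : n ≤ N := by omega
            generalize n^2 = s
            omega
          have key : z^n * q^(2*n^2+2*n+1) * (qb (q^2) N n * (z*q)^(N-n)) =
              z^N * q^(N+1) * (qb (q^2) N n * (q^2)^(n^2) * q^n) := by
            rw [mul_pow]
            calc z^n * q^(2*n^2+2*n+1) * (qb (q^2) N n * (z^(N-n) * q^(N-n)))
                = (z^n * z^(N-n)) * (q^(2*n^2+2*n+1) * q^(N-n)) * qb (q^2) N n := by ring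
              _ = z^N * (q^(N+1) * (q^2)^(n^2) * q^n) * qb (q^2) N n := by rw [hzpow, hqpow]
              _ = _ := by ring
          simp only [hc]
          rw [show n + (N-n) = N from by omega, hPsplit]
          calc (z^n * q^(2*n^2+2*n+1) / qPoch q (q^2) (n+1)) * (qb (q^2) N n * (z*q)^(N-n)) *
                (qPoch q (q^2) (n+1) * ∏ i ∈ range (N-n), (1 - q*(q^2)^(n+1+i)))
              = (z^n * q^(2*n^2+2*n+1) * (qb (q^2) N n * (z*q)^(N-n))) *
                (∏ i ∈ range (N-n), (1 - q*(q^2)^(n+1+i))) *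
                (qPoch q (q^2) (n+1) / qPoch q (q^2) (n+1)) := by ring
            _ = (z^n * q^(2*n^2+2*n+1) * (qb (q^2) N n * (z*q)^(N-n))) *
                (∏ i ∈ range (N-n), (1 - q*(q^2)^(n+1+i))) := by
                rw [div_self hPn, mul_one]
            _ = (z^N * q^(N+1) * (qb (q^2) N n * (q^2)^(n^2) * q^n)) *
                (∏ i ∈ range (N-n), (1 - q*(q^2)^(n+1+i))) := by rw [key]
            _ = (z^N * q^(N+1)) * (qb (q^2) N n * (q^2)^(n^2) * q^n *
                ∏ i ∈ range (N-n), (1 - q*(q^2)^(n+1+i))) := by ring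
      _ = (z^N * q^(N+1)) * ∑ n ∈ range (N+1),
            (qb (q^2) N n * (q^2)^(n^2) * q^n * ∏ i ∈ range (N-n), (1 - q*(q^2)^(n+1+i))) := by
          rw [Finset.mul_sum]
      _ = z^N * q^(N+1) := by rw [hfin]; ring
  calc ∑' n : ℕ, z ^ n * q ^ (2 * n ^ 2 + 2 * n + 1) /
        (qPoch q (q ^ 2) (n + 1) * qPoch (z * q) (q ^ 2) (n + 1))
      = ∑' n : ℕ, ∑' m : ℕ, c (n, m) := tsum_congr hLHS
    _ = ∑' p : ℕ × ℕ, c p := (Summable.tsum_prod hc_sum).symm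
    _ = ∑' N : ℕ, ∑ kl ∈ Finset.HasAntidiagonal.antidiagonal N, c kl := hanti
    _ = ∑' n : ℕ, z ^ n * q ^ (n + 1) / qPoch q (q ^ 2) (n + 1) := tsum_congr hper
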